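/- Let X be a finite connected rack with finite enveloping group G̅_X = As(X)/N (N the normal closure of {g_{x₀}^n}, n the common order of the L_x), and suppose the center of G̅_X is trivial. Then for any group homomorphism ρ̄ : G̅_X → GL(V), the induced rack representation ρ of X defined by ρ_x := ρ̄(g_x·N) is strong: for every stabilizing family (u₁, …, u_k) of X (i.e. L_{u_k} ∘ ⋯ ∘ L_{u_1} = id on X), one has ρ_{u_k} ∘ ⋯ ∘ ρ_{u_1} = id on V. -/
import Mathlib


open Quandles

/-- The conjugation formula: any product of generators of the enveloping group conjugates
a generator `g_y` to `g_{π(P) y}`, where `π` is the action on the rack. -/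
lemma envel_prod_conj {X : Type*} [Rack X] (l : List X) (y : X) :
    (l.map (fun x => (Rack.toEnvelGroup X x : Rack.EnvelGroup X))).prod
        * Rack.toEnvelGroup X y
        * ((l.map (fun x => (Rack.toEnvelGroup X x : Rack.EnvelGroup X))).prod)⁻¹
      = Rack.toEnvelGroup X
          (Rack.envelAction
            ((l.map (fun x => (Rack.toEnvelGroup X x : Rack.EnvelGroup X))).prod) y) := by
  induction l generalizing y with
  | nil => simp
  | cons a t ih =>
    simp only [List.map_cons, List.prod_cons, map_mul, mul_inv_rev]
    have hact : (Rack.toEnvelGroup X (a ◃ (Rack.envelAction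
        ((t.map (fun x => (Rack.toEnvelGroup X x : Rack.EnvelGroup X))).prod) y))
        : Rack.EnvelGroup X)
        = Rack.toEnvelGroup X a
          * Rack.toEnvelGroup X (Rack.envelAction
              ((t.map (fun x => (Rack.toEnvelGroup X x : Rack.EnvelGroup X))).prod) y)
          * (Rack.toEnvelGroup X a : Rack.EnvelGroup X)⁻¹ :=
      (Rack.toEnvelGroup X).map_act'
    have : Rack.envelAction (Rack.toEnvelGroup X a)
        (Rack.envelAction
          ((t.map (fun x => (Rack.toEnvelGroup X x : Rack.EnvelGroup X))).prod) y)
        = a ◃ (Rack.envelAction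
            ((t.map (fun x => (Rack.toEnvelGroup X x : Rack.EnvelGroup X))).prod) y) :=
      Rack.envelAction_prop _ _
    rw [Equiv.Perm.mul_apply, this, hact, ← ih y]
    group

/-- The enveloping group is generated by the image of the rack. -/
lemma envel_closure_range_eq_top (X : Type*) [Rack X] :
    Subgroup.closure (Set.range (fun x : X =>
      (Rack.toEnvelGroup X x : Rack.EnvelGroup X))) = ⊤ := by
  rw [eq_top_iff]
  rintro z -
  induction z using Quotient.inductionOn with
  | h a =>
    induction a with
    | unit => exact Subgroup.one_mem _
    | incl x => exact Subgroup.subset_closure ⟨x, rfl⟩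
    | mul a b iha ihb =>
      exact Subgroup.mul_mem _ iha ihb
    | inv a iha =>
      exact Subgroup.inv_mem _ iha

/-- Let `X` be a finite connected rack with finite enveloping group
`G̅_X = As(X)/N` (`N` the normal closure of `{g_{x₀}^n}`, `n` the common order of the
`L_x`), and suppose the center of `G̅_X` is trivial. Then for any group homomorphism
`ρ̄ : G̅_X →* GL(V)`, the induced rack representation `ρ_x := ρ̄(g_x · N)` is strong: for
every stabilizing family `(u₁, …, u_k)` of `X` (encoded as a list `l = [u_k, …, u_1]`
with `L_{u_k} ∘ ⋯ ∘ L_{u_1} = id`), one has `ρ_{u_k} ∘ ⋯ ∘ ρ_{u_1} = id` on `V`. -/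
theorem trivial_center_induced_rack_rep_strong (X : Type*) [Rack X] [Fintype X]
    (hconn : ∀ x y : X, ∃ φ ∈ Subgroup.closure
      (Set.range (fun x : X => (Rack.act' x : Equiv.Perm X))), φ x = y)
    (x₀ : X)
    (hcenter : Subgroup.center (Rack.EnvelGroup X ⧸ Subgroup.normalClosure
        {(Rack.toEnvelGroup X x₀ : Rack.EnvelGroup X)
          ^ orderOf (Rack.act' x₀ : Equiv.Perm X)}) = ⊥)
    (V : Type*) [AddCommGroup V] [Module ℂ V]
    (ρbar : (Rack.EnvelGroup X ⧸ Subgroup.normalClosure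
        {(Rack.toEnvelGroup X x₀ : Rack.EnvelGroup X)
          ^ orderOf (Rack.act' x₀ : Equiv.Perm X)}) →* (V ≃ₗ[ℂ] V))
    (l : List X)
    (hstab : (l.map (fun x => (Rack.act' x : Equiv.Perm X))).prod = 1) :
    (l.map (fun x =>
      ρbar (QuotientGroup.mk (Rack.toEnvelGroup X x : Rack.EnvelGroup X)))).prod = 1 := by
  set g : X → Rack.EnvelGroup X := fun x => (Rack.toEnvelGroup X x : Rack.EnvelGroup X) with hg
  set P : Rack.EnvelGroup X := (l.map g).prod with hP
  -- π(P) = 1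
  have hπ : Rack.envelAction P = 1 := by
    rw [hP, map_list_prod, List.map_map]
    have : Rack.envelAction ∘ g = fun x => (Rack.act' x : Equiv.Perm X) := by
      funext x
      ext y
      exact Rack.envelAction_prop x y
    rw [this]
    exact hstab
  -- P commutes with all generators
  have hcomm : ∀ y : X, P * g y * P⁻¹ = g y := by
    intro y
    have := envel_prod_conj l y
    rw [← hg, ← hP] at this
    rw [this, hπ]
    rfl
  -- P is central in the enveloping group
  have hcen : ∀ z : Rack.EnvelGroup X, z * P = P * z := by
    intro z
    have hz : z ∈ Subgroup.closure (Set.range g) := by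
      rw [envel_closure_range_eq_top X]; trivial
    have key : ∀ w ∈ Subgroup.closure (Set.range g), Commute P w := by
      intro w hw
      induction hw using Subgroup.closure_induction with
      | mem w hw =>
        obtain ⟨y, rfl⟩ := hw
        have h2 : P * g y = g y * P := by
          calc P * g y = (P * g y * P⁻¹) * P := by group
            _ = g y * P := by rw [hcomm y]
        exact h2
      | one => exact Commute.one_right P
      | mul a b _ _ iha ihb => exact iha.mul_right ihb
      | inv a _ iha => exact iha.inv_right
    exact ((key z hz)).symm
  -- Its image in the quotient is central, hence trivial
  set N := Subgroup.normalClosure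
      {(Rack.toEnvelGroup X x₀ : Rack.EnvelGroup X) ^ orderOf (Rack.act' x₀ : Equiv.Perm X)}
  have hPbar : (QuotientGroup.mk P : Rack.EnvelGroup X ⧸ N) = 1 := by
    have hmem : (QuotientGroup.mk P : Rack.EnvelGroup X ⧸ N) ∈
        Subgroup.center (Rack.EnvelGroup X ⧸ N) := by
      rw [Subgroup.mem_center_iff]
      intro q
      obtain ⟨z, rfl⟩ := QuotientGroup.mk_surjective q
      rw [← QuotientGroup.mk_mul, ← QuotientGroup.mk_mul, hcen z]
    rw [hcenter] at hmem
    exact hmem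
  -- Push through ρbar
  have heq : (l.map (fun x => ρbar (QuotientGroup.mk (g x)))).prod
      = (ρbar.comp (QuotientGroup.mk' N)) P := by
    rw [hP]
    conv_rhs => rw [map_list_prod, List.map_map]
    rfl
  rw [hg] at heq
  rw [heq]
  have : (ρbar.comp (QuotientGroup.mk' N)) P = ρbar (QuotientGroup.mk P) := rfl
  rw [this, hPbar, map_one]
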